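/- Paths of length l from the input labelled 0^k in the spider-web graph G_{b,k} are in bijection with strings t_1⋯t_{k+l} over {0,…,b-1} whose first k digits are 0, via: t_1⋯t_k is the label of the rank-0 vertex, and for 1 ≤ m ≤ l, t_{k+m} is the digit in position j ≡ m (mod k) of the rank-m vertex; under this bijection, the rank-m vertex of the path has label t_{m+1}⋯t_{m+k}. -/
import Mathlib

/-- `stepOK b k l u` : consecutive labels along `u` differ at most in position
with 0-based index `(m-1) % k` at stage `m`. -/
def stepOK (b k l : ℕ) (u : Fin (l + 1) → Fin k → Fin b) : Prop :=
  ∀ m : Fin l, ∀ i : Fin k, (i : ℕ) ≠ (m : ℕ) % k → u m.castSucc i = u m.succ i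

/-- Paths of length `l` in the infinite spider-web graph `G_{b,k}` starting at
the input labelled `0^k`. -/
def SpiderPathFromZero (b k l : ℕ) [NeZero b] : Type :=
  { u : Fin (l + 1) → Fin k → Fin b // u 0 = (fun _ => 0) ∧ stepOK b k l u }

/-- Strings `t_1 ⋯ t_{k+l}` over `{0,…,b-1}` whose first `k` digits are `0`. -/
def ZeroPrefixString (b k l : ℕ) [NeZero b] : Type :=
  { t : Fin (k + l) → Fin b // ∀ i : Fin (k + l), (i : ℕ) < k → t i = 0 }

lemma modB (k m : ℕ) (hk : 0 < k) : (m % k + k - (m + 1) % k) % k = k - 1 := by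
  rcases Nat.lt_or_ge k 2 with h2 | h2
  · have hk1 : k = 1 := by omega
    subst hk1; simp [Nat.mod_one]
  · have h1 : (m + 1) % k = (m % k + 1) % k := by
      rw [Nat.add_mod, Nat.mod_eq_of_lt (show 1 < k by omega)]
    have hr : m % k < k := Nat.mod_lt _ hk
    rcases Nat.lt_or_ge (m % k + 1) k with hc | hc
    · rw [h1, Nat.mod_eq_of_lt hc]
      have e : m % k + k - (m % k + 1) = k - 1 := by omega
      rw [e, Nat.mod_eq_of_lt (by omega)]
    · have hc' : m % k + 1 = k := by omega
      rw [h1, hc', Nat.mod_self, Nat.sub_zero]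
      have e : m % k + k = (k - 1) + k := by omega
      rw [e, Nat.add_mod_right, Nat.mod_eq_of_lt (by omega)]

lemma modA (k m i : ℕ) (hi : i < k) (hne : i ≠ m % k) :
    (i + k - (m + 1) % k) % k + 1 = (i + k - m % k) % k := by
  have hk : 0 < k := by omega
  have hr : m % k < k := Nat.mod_lt _ hk
  rcases Nat.lt_or_ge k 2 with h2 | h2
  · have hk1 : k = 1 := by omega
    subst hk1; omega
  · have h1 : (m + 1) % k = (m % k + 1) % k := by
      rw [Nat.add_mod, Nat.mod_eq_of_lt (show 1 < k by omega)]
    rcases Nat.lt_or_ge (m % k + 1) k with hc | hc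
    · rw [h1, Nat.mod_eq_of_lt hc]
      rcases Nat.lt_or_ge i (m % k) with hlt | hgt
      · have e1 : (i + k - (m % k + 1)) % k = i + k - (m % k + 1) :=
          Nat.mod_eq_of_lt (by omega)
        have e2 : (i + k - m % k) % k = i + k - m % k :=
          Nat.mod_eq_of_lt (by omega)
        rw [e1, e2]; omega
      · have hgt' : m % k < i := by omega
        have e1 : i + k - (m % k + 1) = (i - m % k - 1) + k := by omega
        have e2 : i + k - m % k = (i - m % k) + k := by omega
        rw [e1, e2, Nat.add_mod_right, Nat.add_mod_right]
        have e3 : (i - m % k - 1) % k = i - m % k - 1 := Nat.mod_eq_of_lt (by omega)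
        have e4 : (i - m % k) % k = i - m % k := Nat.mod_eq_of_lt (by omega)
        rw [e3, e4]; omega
    · have hc' : m % k + 1 = k := by omega
      rw [h1, hc', Nat.mod_self, Nat.sub_zero, Nat.add_mod_right,
        Nat.mod_eq_of_lt hi]
      have e2 : i + k - m % k = i + 1 := by omega
      rw [e2, Nat.mod_eq_of_lt (by omega)]

def pathToStr (b k l : ℕ) [NeZero b] (hk : 0 < k)
    (u : SpiderPathFromZero b k l) : ZeroPrefixString b k l :=
  ⟨fun j => if h : (j : ℕ) < k then 0
    else u.1 ⟨(j : ℕ) - k + 1, by have := j.isLt; omega⟩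
             ⟨((j : ℕ) - k) % k, Nat.mod_lt _ hk⟩,
   fun j hj => dif_pos hj⟩

lemma spider_core (b k l : ℕ) [NeZero b] (hk : 0 < k)
    (u : Fin (l + 1) → Fin k → Fin b) (h0 : u 0 = fun _ => 0)
    (hs : stepOK b k l u) (t : Fin (k + l) → Fin b)
    (ht0 : ∀ j : Fin (k + l), (j : ℕ) < k → t j = 0)
    (ht1 : ∀ j : Fin (k + l), ∀ _hj : k ≤ (j : ℕ),
      t j = u ⟨(j : ℕ) - k + 1, by have := j.isLt; omega⟩
               ⟨((j : ℕ) - k) % k, Nat.mod_lt _ hk⟩)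
    (m : Fin (l + 1)) (i : Fin k) :
    u m i = t ⟨(m : ℕ) + (((i : ℕ) + k - (m : ℕ) % k) % k), by
      have h1 := m.isLt
      have h2 := Nat.mod_lt ((i : ℕ) + k - (m : ℕ) % k) i.pos
      omega⟩ := by
  suffices H : ∀ mv (hmv : mv < l + 1) (i : Fin k),
      u ⟨mv, hmv⟩ i = t ⟨mv + (((i : ℕ) + k - mv % k) % k), by
        have h2 := Nat.mod_lt ((i : ℕ) + k - mv % k) i.pos; omega⟩ by
    exact H m.1 m.2 i
  intro mv
  induction mv with
  | zero =>
    intro hmv i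
    have e : 0 + (((i : ℕ) + k - 0 % k) % k) = (i : ℕ) := by
      rw [Nat.zero_mod, Nat.sub_zero, Nat.add_mod_right,
        Nat.mod_eq_of_lt i.isLt, Nat.zero_add]
    rw [show (⟨0, hmv⟩ : Fin (l + 1)) = 0 by ext; simp, h0]
    exact (ht0 _ (show 0 + (((i : ℕ) + k - 0 % k) % k) < k by rw [e]; exact i.isLt)).symm
  | succ n ih =>
    intro hmv i
    by_cases hcase : (i : ℕ) = n % k
    · have eB : (n + 1) + (((i : ℕ) + k - (n + 1) % k) % k) = n + k := by
        rw [hcase, modB k n hk]; omega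
      rw [ht1 _ (show k ≤ (n + 1) + (((i : ℕ) + k - (n + 1) % k) % k) by omega)]
      congr 1
      · ext
        show n + 1 = n + 1 + (((i : ℕ) + k - (n + 1) % k) % k) - k + 1
        rw [eB]; omega
      · ext
        show (i : ℕ) = (n + 1 + (((i : ℕ) + k - (n + 1) % k) % k) - k) % k
        rw [eB]
        have : n + k - k = n := by omega
        rw [this, ← hcase]
    · have hn : n < l := by omega
      have hA := modA k n (i : ℕ) i.isLt hcase
      have hstep : u ⟨n, by omega⟩ i = u ⟨n + 1, hmv⟩ i := hs ⟨n, hn⟩ i hcase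
      calc u ⟨n + 1, hmv⟩ i = u ⟨n, by omega⟩ i := hstep.symm
        _ = t ⟨n + (((i : ℕ) + k - n % k) % k), _⟩ := ih (by omega) i
        _ = t ⟨n + 1 + (((i : ℕ) + k - (n + 1) % k) % k), _⟩ := by
            congr 1; ext
            show n + (((i : ℕ) + k - n % k) % k)
              = n + 1 + (((i : ℕ) + k - (n + 1) % k) % k)
            omega

def strToPath (b k l : ℕ) [NeZero b] (hk : 0 < k)
    (t : ZeroPrefixString b k l) : SpiderPathFromZero b k l :=
  ⟨fun m i => t.1 ⟨(m : ℕ) + (((i : ℕ) + k - (m : ℕ) % k) % k), by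
      have h1 := m.isLt
      have h2 := Nat.mod_lt ((i : ℕ) + k - (m : ℕ) % k) i.pos
      omega⟩,
   ⟨by
      funext i
      apply t.2
      show ((0 : Fin (l + 1)) : ℕ) + (((i : ℕ) + k - ((0 : Fin (l + 1)) : ℕ) % k) % k) < k
      simp only [Fin.val_zero, Nat.zero_mod, Nat.sub_zero, Nat.zero_add]
      exact Nat.mod_lt _ hk,
    by
      intro m i hne
      have hA := modA k (m : ℕ) (i : ℕ) i.isLt hne
      refine congrArg t.1 (Fin.ext ?_)
      show ((m.castSucc : ℕ)) + (((i : ℕ) + k - (m.castSucc : ℕ) % k) % k)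
        = ((m.succ : ℕ)) + (((i : ℕ) + k - (m.succ : ℕ) % k) % k)
      simp only [Fin.coe_castSucc, Fin.val_succ]
      omega⟩⟩

/-- Paths of length `l` from the input `0^k` of `G_{b,k}` are in bijection with
strings of length `k + l` whose first `k` digits are `0`; under the bijection
the rank-`m` vertex of the path has label `t_{m+1} ⋯ t_{m+k}` (read cyclically:
its digit in 0-based position `i` is `t` at 0-based index `m + ((i + k - m % k) % k)`;
in particular `t_1 ⋯ t_k` is the label of the rank-0 vertex and `t_{k+m}` is the
digit in position `j ≡ m (mod k)` of the rank-`m` vertex). -/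
theorem spiderweb_path_string_bijection (b k l : ℕ) (hb : 2 ≤ b) (hk : 1 ≤ k)
    [NeZero b] :
    ∃ e : SpiderPathFromZero b k l ≃ ZeroPrefixString b k l,
      ∀ (u : SpiderPathFromZero b k l) (m : Fin (l + 1)) (i : Fin k),
        u.val m i = (e u).val
          ⟨(m : ℕ) + (((i : ℕ) + k - (m : ℕ) % k) % k), by
            have h1 := m.isLt
            have h2 := Nat.mod_lt ((i : ℕ) + k - (m : ℕ) % k) i.pos
            omega⟩ := by
  have hk' : 0 < k := hk
  refine ⟨⟨pathToStr b k l hk', strToPath b k l hk', ?_, ?_⟩, ?_⟩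
  · intro u
    apply Subtype.ext
    funext m i
    exact (spider_core b k l hk' u.1 u.2.1 u.2.2 (pathToStr b k l hk' u).1
      (fun j hj => dif_pos hj) (fun j hj => dif_neg (by omega)) m i).symm
  · intro t
    apply Subtype.ext
    funext j
    show (pathToStr b k l hk' (strToPath b k l hk' t)).1 j = t.1 j
    by_cases h : (j : ℕ) < k
    · rw [show (pathToStr b k l hk' (strToPath b k l hk' t)).1 j = 0 from dif_pos h]
      exact (t.2 j h).symm
    · rw [show (pathToStr b k l hk' (strToPath b k l hk' t)).1 j
        = (strToPath b k l hk' t).1 ⟨(j : ℕ) - k + 1, by have := j.isLt; omega⟩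
             ⟨((j : ℕ) - k) % k, Nat.mod_lt _ hk'⟩ from dif_neg h]
      refine congrArg t.1 (Fin.ext ?_)
      show ((j : ℕ) - k + 1) + (((((j : ℕ) - k) % k) + k - ((j : ℕ) - k + 1) % k) % k) = (j : ℕ)
      rw [modB k ((j : ℕ) - k) hk']
      have := j.isLt
      omega
  · intro u m i
    exact spider_core b k l hk' u.1 u.2.1 u.2.2 (pathToStr b k l hk' u).1
      (fun j hj => dif_pos hj) (fun j hj => dif_neg (by omega)) m i
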